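/- Fix σ > 0 and ε ∈ (0,1). For each μ ∈ ℝ let X_μ ~ N(μ, σ²), let k(μ) = VaR_ε[-|X_μ|], and let g(μ) = CVaR_ε[-|X_μ|]. Then g is differentiable in μ and g'(μ) = (1/(1-ε))·( ∫_{(k(μ)-μ)/σ}^{-μ/σ} φ(z) dz − ∫_{-μ/σ}^{(-k(μ)-μ)/σ} φ(z) dz ), where φ is the standard normal density. In particular g'(μ) < 0 for μ > 0 and g'(μ) > 0 for μ < 0. -/

import Mathlib

open MeasureTheory ProbabilityTheory

/-- The Gaussian measure on ℝ with mean `μ` and standard deviation `σ`. -/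
noncomputable def gaussMeas (μ σ : ℝ) : Measure ℝ :=
  gaussianReal μ ⟨σ ^ 2, sq_nonneg σ⟩

/-- The standard normal probability density function `φ(z) = (1/√(2π))·exp(-z²/2)`. -/
noncomputable def stdNormalPdf (z : ℝ) : ℝ :=
  (Real.sqrt (2 * Real.pi))⁻¹ * Real.exp (-z ^ 2 / 2)

/-- The conditional value-at-risk of a function `Y` of a random variable with law `P`,
at level `ε`, given that `k` is the value-at-risk `VaR_ε[Y]`:
`CVaR_ε[Y] = (1/(1-ε))·E[Y·1{Y ≥ k}]`. -/
noncomputable def cvar (P : Measure ℝ) (ε : ℝ) (Y : ℝ → ℝ) (k : ℝ) : ℝ :=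
  (1 / (1 - ε)) * ∫ x in {x | k ≤ Y x}, Y x ∂P


section Aux
open intervalIntegral Real


lemma stdNormalPdf_continuous : Continuous stdNormalPdf := by
  unfold stdNormalPdf
  fun_prop

lemma stdNormalPdf_pos (z : ℝ) : 0 < stdNormalPdf z := by
  unfold stdNormalPdf
  positivity

lemma stdNormalPdf_intble (a b : ℝ) : IntervalIntegrable stdNormalPdf volume a b :=
  stdNormalPdf_continuous.intervalIntegrable a b

lemma stdNormalPdf_neg (z : ℝ) : stdNormalPdf (-z) = stdNormalPdf z := by
  simp [stdNormalPdf]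

lemma stdNormalPdf_hasDerivAt (z : ℝ) :
    HasDerivAt stdNormalPdf (-z * stdNormalPdf z) z := by
  have h : HasDerivAt (fun z : ℝ => -z ^ 2 / 2) (-z) z := by
    have := ((hasDerivAt_pow 2 z).neg).div_const 2
    simpa using this.congr_deriv (by ring)
  have := (h.exp).const_mul (Real.sqrt (2 * Real.pi))⁻¹
  unfold stdNormalPdf
  refine this.congr_deriv ?_
  ring

lemma stdNormalPdf_lt {a b : ℝ} (h : b ^ 2 < a ^ 2) : stdNormalPdf a < stdNormalPdf b := by
  unfold stdNormalPdf
  have h2 : (0:ℝ) < (Real.sqrt (2 * Real.pi))⁻¹ := by positivity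
  exact mul_lt_mul_of_pos_left (Real.exp_lt_exp.2 (by linarith)) h2

/-- primitive of the standard normal pdf based at 0 -/
noncomputable def stdCdf0 (t : ℝ) : ℝ := ∫ z in (0:ℝ)..t, stdNormalPdf z

lemma stdCdf0_hasStrictDerivAt (t : ℝ) : HasStrictDerivAt stdCdf0 (stdNormalPdf t) t :=
  intervalIntegral.integral_hasStrictDerivAt_right (stdNormalPdf_intble 0 t)
    (stdNormalPdf_continuous.stronglyMeasurableAtFilter _ _) stdNormalPdf_continuous.continuousAt

lemma stdCdf0_hasDerivAt (t : ℝ) : HasDerivAt stdCdf0 (stdNormalPdf t) t :=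
  (stdCdf0_hasStrictDerivAt t).hasDerivAt

lemma stdCdf0_continuous : Continuous stdCdf0 :=
  continuous_iff_continuousAt.2 fun t => (stdCdf0_hasDerivAt t).continuousAt

lemma integral_stdNormalPdf (a b : ℝ) :
    ∫ z in a..b, stdNormalPdf z = stdCdf0 b - stdCdf0 a := by
  rw [stdCdf0, stdCdf0, intervalIntegral.integral_interval_sub_left (stdNormalPdf_intble 0 b)
    (stdNormalPdf_intble 0 a)]

lemma stdCdf0_strictMono : StrictMono stdCdf0 := by
  intro a b hab
  have h : 0 < ∫ z in a..b, stdNormalPdf z :=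
    intervalIntegral.intervalIntegral_pos_of_pos (stdNormalPdf_intble a b)
      (fun x => stdNormalPdf_pos x) hab
  rw [integral_stdNormalPdf] at h
  linarith

lemma integral_mul_stdNormalPdf (a b : ℝ) :
    ∫ z in a..b, z * stdNormalPdf z = stdNormalPdf a - stdNormalPdf b := by
  have h : ∀ z ∈ Set.uIcc a b, HasDerivAt (fun t => -stdNormalPdf t) (z * stdNormalPdf z) z := by
    intro z _
    exact (stdNormalPdf_hasDerivAt z).neg.congr_deriv (by ring)
  rw [intervalIntegral.integral_eq_sub_of_hasDerivAt h
    ((continuous_id.mul stdNormalPdf_continuous).intervalIntegrable a b)]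
  ring

lemma gaussianPDFReal_eq_std {σ : ℝ} (hσ : 0 < σ) (μ x : ℝ) :
    gaussianPDFReal μ ⟨σ ^ 2, sq_nonneg σ⟩ x = σ⁻¹ * stdNormalPdf ((x - μ) / σ) := by
  unfold gaussianPDFReal stdNormalPdf
  change (Real.sqrt (2 * π * σ ^ 2))⁻¹ * Real.exp (-(x - μ) ^ 2 / (2 * σ ^ 2)) = _
  have h2 : Real.sqrt (2 * π * σ ^ 2) = Real.sqrt (2 * π) * σ := by
    rw [Real.sqrt_mul (by positivity), Real.sqrt_sq hσ.le]
  rw [h2]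
  have h3 : -(x - μ) ^ 2 / (2 * σ ^ 2) = -((x - μ) / σ) ^ 2 / 2 := by
    field_simp
  rw [h3, mul_inv]
  ring

lemma gauss_var_ne_zero {σ : ℝ} (hσ : 0 < σ) : (⟨σ ^ 2, sq_nonneg σ⟩ : NNReal) ≠ 0 := by
  intro h
  have : σ ^ 2 = 0 := congrArg Subtype.val h
  nlinarith

/-- the measure of `Ioo c d` as an interval integral of the standard normal pdf -/
lemma gaussMeas_Ioo {σ : ℝ} (hσ : 0 < σ) (μ c d : ℝ) (hcd : c ≤ d) :
    gaussMeas μ σ (Set.Ioo c d) =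
      ENNReal.ofReal (∫ z in ((c - μ) / σ)..((d - μ) / σ), stdNormalPdf z) := by
  rw [gaussMeas, gaussianReal_apply_eq_integral _ (gauss_var_ne_zero hσ)]
  congr 1
  rw [← MeasureTheory.integral_Ioc_eq_integral_Ioo, ← intervalIntegral.integral_of_le hcd]
  have h1 : ∀ x : ℝ, gaussianPDFReal μ ⟨σ ^ 2, sq_nonneg σ⟩ x
      = σ⁻¹ * stdNormalPdf (x / σ - μ / σ) := by
    intro x
    rw [gaussianPDFReal_eq_std hσ, sub_div]
  rw [intervalIntegral.integral_congr (fun x _ => h1 x),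
    intervalIntegral.integral_comp_div_sub (fun z => σ⁻¹ * stdNormalPdf z) hσ.ne' (μ / σ),
    intervalIntegral.integral_const_mul, smul_eq_mul, ← mul_assoc, mul_inv_cancel₀ hσ.ne',
    one_mul, sub_div, sub_div]

lemma gaussMeas_setIntegral {σ : ℝ} (hσ : 0 < σ) (μ : ℝ) (f : ℝ → ℝ) (hf : Measurable f)
    (s : Set ℝ) (hs : MeasurableSet s) :
    ∫ x in s, f x ∂(gaussMeas μ σ) =
      ∫ x in s, gaussianPDFReal μ ⟨σ ^ 2, sq_nonneg σ⟩ x * f x := by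
  rw [gaussMeas, gaussianReal_of_var_ne_zero _ (gauss_var_ne_zero hσ)]
  have h1 : (gaussianPDF μ ⟨σ ^ 2, sq_nonneg σ⟩)
      = fun x => ((gaussianPDFReal μ ⟨σ ^ 2, sq_nonneg σ⟩ x).toNNReal : ENNReal) := rfl
  erw [h1, setIntegral_withDensity_eq_setIntegral_smul
    (measurable_gaussianPDFReal μ _).real_toNNReal f hs]
  apply setIntegral_congr_fun hs
  intro x _
  simp only [NNReal.smul_def, Real.coe_toNNReal _ (gaussianPDFReal_nonneg _ _ _), smul_eq_mul]
  exact congrArg (· * f x) (Real.coe_toNNReal _ (gaussianPDFReal_nonneg _ _ _))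

instance gaussMeas_prob (μ σ : ℝ) : IsProbabilityMeasure (gaussMeas μ σ) := by
  rw [gaussMeas]; exact instIsProbabilityMeasureGaussianReal _ _

lemma key_int (σ μ a b : ℝ) :
    ∫ z in a..b, stdNormalPdf z * (σ * z + μ)
      = σ * (stdNormalPdf a - stdNormalPdf b) + μ * (stdCdf0 b - stdCdf0 a) := by
  have h : ∀ z : ℝ, stdNormalPdf z * (σ * z + μ)
      = σ * (z * stdNormalPdf z) + μ * stdNormalPdf z := fun z => by ring
  have hzphi : IntervalIntegrable (fun z : ℝ => z * stdNormalPdf z) volume a b :=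
    (continuous_id.mul stdNormalPdf_continuous).intervalIntegrable a b
  rw [intervalIntegral.integral_congr (fun z _ => h z), intervalIntegral.integral_add
      (hzphi.const_mul σ) ((stdNormalPdf_intble a b).const_mul μ),
    intervalIntegral.integral_const_mul, intervalIntegral.integral_const_mul,
    integral_mul_stdNormalPdf, integral_stdNormalPdf]

lemma constraint_explicit {σ ε : ℝ} (hσ : 0 < σ) (hε : ε ∈ Set.Ioo (0 : ℝ) 1) {c μ : ℝ}
    (hc : c ≤ 0) (h : gaussMeas μ σ {x | -|x| ≤ c} = ENNReal.ofReal ε) :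
    ∫ z in ((c - μ) / σ)..((-c - μ) / σ), stdNormalPdf z = 1 - ε := by
  have hset : {x : ℝ | -|x| ≤ c} = Set.Iic c ∪ Set.Ici (-c) := by
    ext x
    simp only [Set.mem_setOf_eq, Set.mem_union, Set.mem_Iic, Set.mem_Ici, neg_le, le_abs,
      neg_le_neg_iff]
    tauto
  have hcompl : (Set.Iic c ∪ Set.Ici (-c))ᶜ = Set.Ioo c (-c) := by
    ext x
    simp only [Set.mem_compl_iff, Set.mem_union, Set.mem_Iic, Set.mem_Ici, Set.mem_Ioo,
      not_or, not_le]
  have hmeas : gaussMeas μ σ (Set.Ioo c (-c)) = ENNReal.ofReal (1 - ε) := by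
    rw [← hcompl, prob_compl_eq_one_sub (measurableSet_Iic.union measurableSet_Ici),
      ← hset, h, ENNReal.ofReal_sub _ hε.1.le, ENNReal.ofReal_one]
  rw [gaussMeas_Ioo hσ μ c (-c) (by linarith)] at hmeas
  have hnn : 0 ≤ ∫ z in ((c - μ) / σ)..((-c - μ) / σ), stdNormalPdf z :=
    intervalIntegral.integral_nonneg
      (by apply div_le_div_of_nonneg_right ?_ hσ.le; linarith)
      (fun z _ => (stdNormalPdf_pos z).le)
  rw [ENNReal.ofReal_eq_ofReal_iff hnn (by linarith [hε.2])] at hmeas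
  exact hmeas

lemma g_explicit {σ : ℝ} (ε : ℝ) (hσ : 0 < σ) {c : ℝ} (μ : ℝ) (hc : c ≤ 0) :
    cvar (gaussMeas μ σ) ε (fun x => -|x|) c
      = (1 / (1 - ε)) *
          (σ * (stdNormalPdf ((c - μ) / σ) + stdNormalPdf ((-c - μ) / σ)
              - 2 * stdNormalPdf (-μ / σ))
            + μ * (2 * stdCdf0 (-μ / σ) - stdCdf0 ((c - μ) / σ) - stdCdf0 ((-c - μ) / σ))) := by
  have hset : {x : ℝ | c ≤ -|x|} = Set.Icc c (-c) := by
    ext x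
    simp only [Set.mem_setOf_eq, Set.mem_Icc, le_neg, abs_le, neg_neg]
  have huw : (c - μ) / σ ≤ -μ / σ := by
    apply div_le_div_of_nonneg_right ?_ hσ.le; linarith
  have hwv : -μ / σ ≤ (-c - μ) / σ := by
    apply div_le_div_of_nonneg_right ?_ hσ.le; linarith
  rw [cvar, hset, gaussMeas_setIntegral hσ μ (fun x => -|x|) (measurable_abs.neg) _ measurableSet_Icc]
  have step1 : ∫ x in Set.Icc c (-c), gaussianPDFReal μ ⟨σ ^ 2, sq_nonneg σ⟩ x * -|x|
      = ∫ x in c..(-c), gaussianPDFReal μ ⟨σ ^ 2, sq_nonneg σ⟩ x * -|x| := by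
    rw [intervalIntegral.integral_of_le (by linarith), MeasureTheory.integral_Icc_eq_integral_Ioc]
  rw [step1]
  have step2 : ∫ x in c..(-c), gaussianPDFReal μ ⟨σ ^ 2, sq_nonneg σ⟩ x * -|x|
      = σ • ∫ z in ((c - μ) / σ)..((-c - μ) / σ),
          σ⁻¹ * stdNormalPdf z * -|σ * z + μ| := by
    have hsub := intervalIntegral.integral_comp_div_sub
      (a := c) (b := -c) (fun z => σ⁻¹ * stdNormalPdf z * -|σ * z + μ|) hσ.ne' (μ / σ)
    beta_reduce at hsub
    rw [show (c - μ) / σ = c / σ - μ / σ by ring, show (-c - μ) / σ = -c / σ - μ / σ by ring,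
      ← hsub]
    apply intervalIntegral.integral_congr
    intro x _
    beta_reduce
    rw [gaussianPDFReal_eq_std hσ, sub_div]
    congr 2
    field_simp
    simp
  rw [step2, smul_eq_mul]

  have step3 : ∫ z in ((c - μ) / σ)..((-c - μ) / σ), σ⁻¹ * stdNormalPdf z * -|σ * z + μ|
      = σ⁻¹ * ∫ z in ((c - μ) / σ)..((-c - μ) / σ), stdNormalPdf z * -|σ * z + μ| := by
    rw [← intervalIntegral.integral_const_mul]
    apply intervalIntegral.integral_congr
    intro z _; ring
  rw [step3]
  have hint : ∀ a b : ℝ, IntervalIntegrable (fun z => stdNormalPdf z * -|σ * z + μ|) volume a b :=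
    fun a b => (stdNormalPdf_continuous.mul
      (((continuous_const.mul continuous_id).add continuous_const).abs.neg)).intervalIntegrable a b
  have split : ∫ z in ((c - μ) / σ)..((-c - μ) / σ), stdNormalPdf z * -|σ * z + μ|
      = (∫ z in ((c - μ) / σ)..(-μ / σ), stdNormalPdf z * -|σ * z + μ|)
        + ∫ z in (-μ / σ)..((-c - μ) / σ), stdNormalPdf z * -|σ * z + μ| :=
    (intervalIntegral.integral_add_adjacent_intervals (hint _ _) (hint _ _)).symm
  have piece1 : ∫ z in ((c - μ) / σ)..(-μ / σ), stdNormalPdf z * -|σ * z + μ|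
      = ∫ z in ((c - μ) / σ)..(-μ / σ), stdNormalPdf z * (σ * z + μ) := by
    apply intervalIntegral.integral_congr
    intro z hz
    rw [Set.uIcc_of_le huw, Set.mem_Icc] at hz
    have hz2 : σ * z + μ ≤ 0 := by
      have := (le_div_iff₀ hσ).mp hz.2
      linarith
    beta_reduce
    rw [abs_of_nonpos hz2, neg_neg]
  have piece2 : ∫ z in (-μ / σ)..((-c - μ) / σ), stdNormalPdf z * -|σ * z + μ|
      = ∫ z in (-μ / σ)..((-c - μ) / σ), stdNormalPdf z * -(σ * z + μ) := by
    apply intervalIntegral.integral_congr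
    intro z hz
    rw [Set.uIcc_of_le hwv, Set.mem_Icc] at hz
    have hz2 : 0 ≤ σ * z + μ := by
      have := (div_le_iff₀ hσ).mp hz.1
      linarith
    beta_reduce
    rw [abs_of_nonneg hz2]
  have piece2' : ∫ z in (-μ / σ)..((-c - μ) / σ), stdNormalPdf z * -(σ * z + μ)
      = -∫ z in (-μ / σ)..((-c - μ) / σ), stdNormalPdf z * (σ * z + μ) := by
    rw [← intervalIntegral.integral_neg]
    apply intervalIntegral.integral_congr
    intro z _; ring
  rw [split, piece1, piece2, piece2', key_int, key_int]
  field_simp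
  ring

lemma N_strictAnti {σ : ℝ} (hσ : 0 < σ) (μ : ℝ) :
    StrictAnti (fun c => stdCdf0 ((-c - μ) / σ) - stdCdf0 ((c - μ) / σ)) := by
  intro c₁ c₂ h
  have h1 : stdCdf0 ((c₁ - μ) / σ) < stdCdf0 ((c₂ - μ) / σ) :=
    stdCdf0_strictMono (by apply div_lt_div_of_pos_right ?_ hσ; linarith)
  have h2 : stdCdf0 ((-c₂ - μ) / σ) < stdCdf0 ((-c₁ - μ) / σ) :=
    stdCdf0_strictMono (by apply div_lt_div_of_pos_right ?_ hσ; linarith)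
  simp only
  linarith

lemma N_cont_mu {σ : ℝ} (a : ℝ) :
    Continuous fun μ : ℝ => stdCdf0 ((-a - μ) / σ) - stdCdf0 ((a - μ) / σ) :=
  (stdCdf0_continuous.comp ((continuous_const.sub continuous_id).div_const σ)).sub
    (stdCdf0_continuous.comp ((continuous_const.sub continuous_id).div_const σ))

lemma implicit_tendsto {σ : ℝ} (hσ : 0 < σ) (k : ℝ → ℝ) (r : ℝ)
    (hcons : ∀ μ, stdCdf0 ((-k μ - μ) / σ) - stdCdf0 ((k μ - μ) / σ) = r) (μ₀ : ℝ) :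
    Filter.Tendsto k (nhds μ₀) (nhds (k μ₀)) := by
  rw [tendsto_order]
  constructor
  · intro a ha
    have h1 : r < stdCdf0 ((-a - μ₀) / σ) - stdCdf0 ((a - μ₀) / σ) := by
      have := N_strictAnti hσ μ₀ ha
      simp only at this
      rw [hcons μ₀] at this
      exact this
    have h2 := (N_cont_mu (σ := σ) a).tendsto μ₀
    filter_upwards [h2.eventually (eventually_gt_nhds h1)] with μ hμ
    by_contra hcon
    push_neg at hcon
    have h3 : stdCdf0 ((-a - μ) / σ) - stdCdf0 ((a - μ) / σ)
        ≤ stdCdf0 ((-k μ - μ) / σ) - stdCdf0 ((k μ - μ) / σ) :=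
      (N_strictAnti hσ μ).antitone hcon
    rw [hcons μ] at h3
    linarith
  · intro a ha
    have h1 : stdCdf0 ((-a - μ₀) / σ) - stdCdf0 ((a - μ₀) / σ) < r := by
      have := N_strictAnti hσ μ₀ ha
      simp only at this
      rw [hcons μ₀] at this
      exact this
    have h2 := (N_cont_mu (σ := σ) a).tendsto μ₀
    filter_upwards [h2.eventually (eventually_lt_nhds h1)] with μ hμ
    by_contra hcon
    push_neg at hcon
    have h3 : stdCdf0 ((-k μ - μ) / σ) - stdCdf0 ((k μ - μ) / σ)
        ≤ stdCdf0 ((-a - μ) / σ) - stdCdf0 ((a - μ) / σ) :=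
      (N_strictAnti hσ μ).antitone hcon
    rw [hcons μ] at h3
    linarith

set_option maxHeartbeats 1000000 in
lemma implicit_hasDerivAt {σ : ℝ} (hσ : 0 < σ) (k : ℝ → ℝ) (r : ℝ)
    (hcons : ∀ μ, stdCdf0 ((-k μ - μ) / σ) - stdCdf0 ((k μ - μ) / σ) = r) (μ₀ : ℝ) :
    HasDerivAt k
      ((stdNormalPdf ((k μ₀ - μ₀) / σ) - stdNormalPdf ((-k μ₀ - μ₀) / σ)) /
        (stdNormalPdf ((k μ₀ - μ₀) / σ) + stdNormalPdf ((-k μ₀ - μ₀) / σ))) μ₀ := by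
  set c₀ := k μ₀ with hc₀
  set p := stdNormalPdf ((c₀ - μ₀) / σ) with hp'
  set q := stdNormalPdf ((-c₀ - μ₀) / σ) with hq'
  have hp : 0 < p := stdNormalPdf_pos _
  have hq : 0 < q := stdNormalPdf_pos _
  set A : ℝ := (p - q) / σ with hA'
  set B : ℝ := -(p + q) / σ with hB'
  set K : ℝ := (p - q) / (p + q) with hK'
  have hBneg : B < 0 := by
    rw [hB']
    apply div_neg_of_neg_of_pos (by linarith) hσ
  have hBne : B ≠ 0 := hBneg.ne
  have hKB : K * B = -A := by
    rw [hK', hB', hA']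
    field_simp
  -- the two-variable function and its strict derivative
  have hg1 : HasStrictFDerivAt (fun x : ℝ × ℝ => (-x.2 - x.1) / σ)
      ((σ⁻¹ : ℝ) • (-(ContinuousLinearMap.snd ℝ ℝ ℝ) - ContinuousLinearMap.fst ℝ ℝ ℝ))
      (μ₀, c₀) := by
    refine (((hasStrictFDerivAt_snd (𝕜 := ℝ) (p := (μ₀, c₀))).neg.sub (hasStrictFDerivAt_fst (𝕜 := ℝ) (p := (μ₀, c₀)))).const_smul (σ⁻¹ : ℝ)).congr_of_eventuallyEq
      (Filter.Eventually.of_forall fun x => ?_)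
    simp [div_eq_inv_mul]
  have hg2 : HasStrictFDerivAt (fun x : ℝ × ℝ => (x.2 - x.1) / σ)
      ((σ⁻¹ : ℝ) • (ContinuousLinearMap.snd ℝ ℝ ℝ - ContinuousLinearMap.fst ℝ ℝ ℝ))
      (μ₀, c₀) := by
    refine (((hasStrictFDerivAt_snd (𝕜 := ℝ) (p := (μ₀, c₀))).sub (hasStrictFDerivAt_fst (𝕜 := ℝ) (p := (μ₀, c₀)))).const_smul (σ⁻¹ : ℝ)).congr_of_eventuallyEq
      (Filter.Eventually.of_forall fun x => ?_)
    simp [div_eq_inv_mul]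
  have hF : HasStrictFDerivAt
      (fun x : ℝ × ℝ => stdCdf0 ((-x.2 - x.1) / σ) - stdCdf0 ((x.2 - x.1) / σ))
      (q • ((σ⁻¹ : ℝ) • (-(ContinuousLinearMap.snd ℝ ℝ ℝ) - ContinuousLinearMap.fst ℝ ℝ ℝ))
        - p • ((σ⁻¹ : ℝ) • (ContinuousLinearMap.snd ℝ ℝ ℝ - ContinuousLinearMap.fst ℝ ℝ ℝ)))
      (μ₀, c₀) :=
    (HasStrictDerivAt.comp_hasStrictFDerivAt (h₂ := stdCdf0) (μ₀, c₀) (stdCdf0_hasStrictDerivAt ((-c₀ - μ₀) / σ)) hg1).sub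
      (HasStrictDerivAt.comp_hasStrictFDerivAt (h₂ := stdCdf0) (μ₀, c₀) (stdCdf0_hasStrictDerivAt ((c₀ - μ₀) / σ)) hg2)
  set L := (q • ((σ⁻¹ : ℝ) • (-(ContinuousLinearMap.snd ℝ ℝ ℝ) - ContinuousLinearMap.fst ℝ ℝ ℝ))
        - p • ((σ⁻¹ : ℝ) • (ContinuousLinearMap.snd ℝ ℝ ℝ - ContinuousLinearMap.fst ℝ ℝ ℝ)))
    with hL'
  have hL : ∀ a b : ℝ, L (a, b) = A * a + B * b := by
    intro a b
    simp only [hL', hA', hB', ContinuousLinearMap.coe_sub', Pi.sub_apply,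
      ContinuousLinearMap.smul_apply, ContinuousLinearMap.coe_fst',
      ContinuousLinearMap.coe_snd', ContinuousLinearMap.neg_apply, smul_eq_mul]
    field_simp
    ring
  have hlit := hF.isLittleO
  have hkc := implicit_tendsto hσ k r hcons μ₀
  have ht : Filter.Tendsto (fun μ => ((μ, k μ), (μ₀, c₀))) (nhds μ₀)
      (nhds ((μ₀, c₀), (μ₀, c₀))) :=
    (Filter.Tendsto.prodMk_nhds (Filter.tendsto_id.prodMk_nhds hkc) tendsto_const_nhds)
  -- generic eventual bound
  have hbound : ∀ c : ℝ, 0 < c → ∀ᶠ μ in nhds μ₀,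
      |A * (μ - μ₀) + B * (k μ - c₀)| ≤ c * max |μ - μ₀| |k μ - c₀| := by
    intro c hc
    filter_upwards [ht.eventually (hlit.bound hc)] with μ hμ
    rw [hcons μ, hcons μ₀, sub_self, zero_sub, Prod.mk_sub_mk, hL, norm_neg,
      Real.norm_eq_abs, Prod.norm_def, Real.norm_eq_abs, Real.norm_eq_abs] at hμ
    exact hμ
  have hBpos : 0 < |B| := abs_pos.2 hBne
  set M : ℝ := (2 * |A| + |B|) / |B| with hM'
  have hM0 : 0 ≤ M := by positivity
  have hlip : ∀ᶠ μ in nhds μ₀, |k μ - c₀| ≤ M * |μ - μ₀| := by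
    filter_upwards [hbound (|B| / 2) (by positivity)] with μ hμ
    have h1 : |B| * |k μ - c₀| = |B * (k μ - c₀)| := (abs_mul _ _).symm
    have h2 : |B * (k μ - c₀)| ≤ |A * (μ - μ₀) + B * (k μ - c₀)| + |A * (μ - μ₀)| := by
      have := abs_sub_abs_le_abs_sub (B * (k μ - c₀) + A * (μ - μ₀)) (A * (μ - μ₀))
      have h3 := abs_add_le (A * (μ - μ₀)) (B * (k μ - c₀))
      calc |B * (k μ - c₀)| = |A * (μ - μ₀) + B * (k μ - c₀) + -(A * (μ - μ₀))| := by
            ring_nf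
          _ ≤ |A * (μ - μ₀) + B * (k μ - c₀)| + |A * (μ - μ₀)| := by
            simpa using abs_add_le (A * (μ - μ₀) + B * (k μ - c₀)) (-(A * (μ - μ₀)))
    have h4 : max |μ - μ₀| |k μ - c₀| ≤ |μ - μ₀| + |k μ - c₀| :=
      max_le_add_of_nonneg (abs_nonneg _) (abs_nonneg _)
    have h5 : |A * (μ - μ₀)| = |A| * |μ - μ₀| := abs_mul _ _
    have h6 : |B| * |k μ - c₀| ≤ (2 * |A| + |B|) * |μ - μ₀| := by
      nlinarith [abs_nonneg (k μ - c₀), abs_nonneg (μ - μ₀)]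
    rw [hM', div_mul_eq_mul_div, le_div_iff₀ hBpos]
    linarith [h6]
  rw [hasDerivAt_iff_isLittleO, Asymptotics.isLittleO_iff]
  intro e he
  have hc2 : 0 < e * |B| / (1 + M) := by positivity
  filter_upwards [hbound _ hc2, hlip] with μ hμ hlipμ
  have hmax : max |μ - μ₀| |k μ - c₀| ≤ (1 + M) * |μ - μ₀| := by
    apply max_le
    · nlinarith [abs_nonneg (μ - μ₀)]
    · nlinarith [abs_nonneg (μ - μ₀)]
  have h7 : |A * (μ - μ₀) + B * (k μ - c₀)| ≤ e * |B| * |μ - μ₀| := by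
    calc |A * (μ - μ₀) + B * (k μ - c₀)| ≤ e * |B| / (1 + M) * max |μ - μ₀| |k μ - c₀| := hμ
      _ ≤ e * |B| / (1 + M) * ((1 + M) * |μ - μ₀|) := by
          apply mul_le_mul_of_nonneg_left hmax (by positivity)
      _ = e * |B| * |μ - μ₀| := by field_simp
  have h8 : (k μ - c₀ - (μ - μ₀) * K) * B = A * (μ - μ₀) + B * (k μ - c₀) := by
    have : (μ - μ₀) * (K * B) = (μ - μ₀) * (-A) := by rw [hKB]
    nlinarith [hKB]
  have h9 : |k μ - c₀ - (μ - μ₀) * K| * |B| ≤ (e * |μ - μ₀|) * |B| := by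
    rw [← abs_mul, h8]
    calc |A * (μ - μ₀) + B * (k μ - c₀)| ≤ e * |B| * |μ - μ₀| := h7
      _ = e * |μ - μ₀| * |B| := by ring
  have h10 : |k μ - c₀ - (μ - μ₀) * K| ≤ e * |μ - μ₀| :=
    le_of_mul_le_mul_right h9 hBpos
  simpa [Real.norm_eq_abs, smul_eq_mul] using h10

lemma reflect_int (a b : ℝ) :
    ∫ z in (-b)..(-a), stdNormalPdf z = ∫ z in a..b, stdNormalPdf z := by
  rw [← intervalIntegral.integral_comp_neg stdNormalPdf]
  exact intervalIntegral.integral_congr fun z _ => (stdNormalPdf_neg z)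

lemma tail_cmp {w L : ℝ} (hw : w < 0) (hL : 0 < L) :
    ∫ z in (w - L)..w, stdNormalPdf z < ∫ z in w..(w + L), stdNormalPdf z := by
  have h1 : ∫ z in (w - L)..w, stdNormalPdf z = ∫ t in (0:ℝ)..L, stdNormalPdf (w - t) := by
    rw [intervalIntegral.integral_comp_sub_left stdNormalPdf w]
    norm_num
  have h2 : ∫ z in w..(w + L), stdNormalPdf z = ∫ t in (0:ℝ)..L, stdNormalPdf (t + w) := by
    rw [intervalIntegral.integral_comp_add_right stdNormalPdf w]
    norm_num [add_comm]
  rw [h1, h2, ← sub_pos]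
  have hi1 : IntervalIntegrable (fun t => stdNormalPdf (t + w)) volume 0 L :=
    (stdNormalPdf_continuous.comp (continuous_id.add continuous_const)).intervalIntegrable 0 L
  have hi2 : IntervalIntegrable (fun t => stdNormalPdf (w - t)) volume 0 L :=
    (stdNormalPdf_continuous.comp (continuous_const.sub continuous_id)).intervalIntegrable 0 L
  rw [← intervalIntegral.integral_sub hi1 hi2]
  apply intervalIntegral.intervalIntegral_pos_of_pos_on (hi1.sub hi2)
  · intro t ht
    have h3 : (w + t) ^ 2 < (w - t) ^ 2 := by nlinarith [ht.1, ht.2, hw]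
    have := stdNormalPdf_lt (a := w - t) (b := w + t) (by nlinarith)
    have heq : w + t = t + w := by ring
    rw [heq] at this
    linarith
  · exact hL

lemma k_neg {σ ε : ℝ} (hε : ε ∈ Set.Ioo (0 : ℝ) 1) (k : ℝ → ℝ) (hk0 : ∀ μ, k μ ≤ 0)
    (hk : ∀ μ, gaussMeas μ σ {x | -|x| ≤ k μ} = ENNReal.ofReal ε) (μ : ℝ) : k μ < 0 := by
  rcases lt_or_eq_of_le (hk0 μ) with h | h
  · exact h
  · exfalso
    have hu : {x : ℝ | -|x| ≤ k μ} = Set.univ := by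
      rw [Set.eq_univ_iff_forall]
      intro x
      simp only [Set.mem_setOf_eq, h]
      simpa using neg_nonpos_of_nonneg (abs_nonneg x)
    have := hk μ
    rw [hu, measure_univ, eq_comm, ENNReal.ofReal_eq_one] at this
    exact absurd this (ne_of_lt hε.2)

end Aux

open intervalIntegral Real

/-- Fix `σ > 0` and `ε ∈ (0,1)`. For each `μ` let `X_μ ~ N(μ, σ²)`, let
`k μ = VaR_ε[-|X_μ|]` (the unique nonpositive real with `P(-|X_μ| ≤ k μ) = ε`) and let
`g μ = CVaR_ε[-|X_μ|]`. Then `g` is differentiable with derivative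
`g'(μ) = (1/(1-ε))·(∫_{(k(μ)-μ)/σ}^{-μ/σ} φ − ∫_{-μ/σ}^{(-k(μ)-μ)/σ} φ)`;
in particular `g'(μ) < 0` for `μ > 0` and `g'(μ) > 0` for `μ < 0`. -/
theorem hasDerivAt_cvar_neg_abs
    (σ ε : ℝ) (hσ : 0 < σ) (hε : ε ∈ Set.Ioo (0 : ℝ) 1)
    (k g : ℝ → ℝ) (hk0 : ∀ μ, k μ ≤ 0)
    (hk : ∀ μ, gaussMeas μ σ {x | -|x| ≤ k μ} = ENNReal.ofReal ε)
    (hg : ∀ μ, g μ = cvar (gaussMeas μ σ) ε (fun x => -|x|) (k μ)) :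
    ∀ μ,
      HasDerivAt g
        ((1 / (1 - ε)) *
          ((∫ z in ((k μ - μ) / σ)..(-μ / σ), stdNormalPdf z) -
            ∫ z in (-μ / σ)..((-k μ - μ) / σ), stdNormalPdf z)) μ ∧
      (0 < μ →
        (1 / (1 - ε)) *
          ((∫ z in ((k μ - μ) / σ)..(-μ / σ), stdNormalPdf z) -
            ∫ z in (-μ / σ)..((-k μ - μ) / σ), stdNormalPdf z) < 0) ∧
      (μ < 0 →
        0 < (1 / (1 - ε)) *
          ((∫ z in ((k μ - μ) / σ)..(-μ / σ), stdNormalPdf z) -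
            ∫ z in (-μ / σ)..((-k μ - μ) / σ), stdNormalPdf z)) := by
  have hfacpos : 0 < 1 / (1 - ε) := by
    have h1 : 0 < 1 - ε := by linarith [hε.2]
    positivity
  have hconsN : ∀ μ, stdCdf0 ((-k μ - μ) / σ) - stdCdf0 ((k μ - μ) / σ) = 1 - ε := by
    intro μ
    have := constraint_explicit hσ hε (hk0 μ) (hk μ)
    rwa [integral_stdNormalPdf] at this
  intro μ₀
  set c₀ := k μ₀ with hc₀
  set u₀ := (c₀ - μ₀) / σ with hu₀
  set v₀ := (-c₀ - μ₀) / σ with hv₀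
  set w₀ := -μ₀ / σ with hw₀
  set p := stdNormalPdf u₀ with hp'
  set q := stdNormalPdf v₀ with hq'
  have hp : 0 < p := stdNormalPdf_pos _
  have hq : 0 < q := stdNormalPdf_pos _
  set K : ℝ := (p - q) / (p + q) with hK'
  have hKpq : K * (p + q) = p - q := by
    rw [hK']
    field_simp
  have hkd : HasDerivAt k K μ₀ := implicit_hasDerivAt hσ k (1 - ε) hconsN μ₀
  -- derivative of the explicit formula
  have hu : HasDerivAt (fun μ => (k μ - μ) / σ) ((K - 1) / σ) μ₀ :=
    (hkd.sub (hasDerivAt_id μ₀)).div_const σ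
  have hv : HasDerivAt (fun μ => (-k μ - μ) / σ) ((-K - 1) / σ) μ₀ :=
    (hkd.neg.sub (hasDerivAt_id μ₀)).div_const σ
  have hw : HasDerivAt (fun μ : ℝ => -μ / σ) (-1 / σ) μ₀ :=
    ((hasDerivAt_id μ₀).neg).div_const σ
  have hφu : HasDerivAt (fun μ => stdNormalPdf ((k μ - μ) / σ))
      (-u₀ * p * ((K - 1) / σ)) μ₀ := HasDerivAt.comp (h₂ := stdNormalPdf) μ₀ (stdNormalPdf_hasDerivAt u₀) hu
  have hφv : HasDerivAt (fun μ => stdNormalPdf ((-k μ - μ) / σ))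
      (-v₀ * q * ((-K - 1) / σ)) μ₀ := HasDerivAt.comp (h₂ := stdNormalPdf) μ₀ (stdNormalPdf_hasDerivAt v₀) hv
  have hφw : HasDerivAt (fun μ : ℝ => stdNormalPdf (-μ / σ))
      (-w₀ * stdNormalPdf w₀ * (-1 / σ)) μ₀ := HasDerivAt.comp (h₂ := stdNormalPdf) μ₀ (stdNormalPdf_hasDerivAt w₀) hw
  have hΦu : HasDerivAt (fun μ => stdCdf0 ((k μ - μ) / σ)) (p * ((K - 1) / σ)) μ₀ :=
    HasDerivAt.comp (h₂ := stdCdf0) μ₀ (stdCdf0_hasDerivAt u₀) hu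
  have hΦv : HasDerivAt (fun μ => stdCdf0 ((-k μ - μ) / σ)) (q * ((-K - 1) / σ)) μ₀ :=
    HasDerivAt.comp (h₂ := stdCdf0) μ₀ (stdCdf0_hasDerivAt v₀) hv
  have hΦw : HasDerivAt (fun μ : ℝ => stdCdf0 (-μ / σ)) (stdNormalPdf w₀ * (-1 / σ)) μ₀ :=
    HasDerivAt.comp (h₂ := stdCdf0) μ₀ (stdCdf0_hasDerivAt w₀) hw
  have inner1 : HasDerivAt (fun μ => σ * (stdNormalPdf ((k μ - μ) / σ)
      + stdNormalPdf ((-k μ - μ) / σ) - 2 * stdNormalPdf (-μ / σ)))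
      (σ * (-u₀ * p * ((K - 1) / σ) + -v₀ * q * ((-K - 1) / σ)
        - 2 * (-w₀ * stdNormalPdf w₀ * (-1 / σ)))) μ₀ :=
    (((hφu.add hφv).sub (hφw.const_mul 2)).const_mul σ)
  have inner2 : HasDerivAt (fun μ => μ * (2 * stdCdf0 (-μ / σ)
      - stdCdf0 ((k μ - μ) / σ) - stdCdf0 ((-k μ - μ) / σ)))
      (1 * (2 * stdCdf0 w₀ - stdCdf0 u₀ - stdCdf0 v₀)
        + μ₀ * (2 * (stdNormalPdf w₀ * (-1 / σ)) - p * ((K - 1) / σ) - q * ((-K - 1) / σ))) μ₀ :=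
    (hasDerivAt_id μ₀).mul (((hΦw.const_mul 2).sub hΦu).sub hΦv)
  have big : HasDerivAt (fun μ => (1 / (1 - ε)) * (σ * (stdNormalPdf ((k μ - μ) / σ)
      + stdNormalPdf ((-k μ - μ) / σ) - 2 * stdNormalPdf (-μ / σ))
      + μ * (2 * stdCdf0 (-μ / σ) - stdCdf0 ((k μ - μ) / σ) - stdCdf0 ((-k μ - μ) / σ))))
      ((1 / (1 - ε)) * ((σ * (-u₀ * p * ((K - 1) / σ) + -v₀ * q * ((-K - 1) / σ)
        - 2 * (-w₀ * stdNormalPdf w₀ * (-1 / σ))))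
        + (1 * (2 * stdCdf0 w₀ - stdCdf0 u₀ - stdCdf0 v₀)
        + μ₀ * (2 * (stdNormalPdf w₀ * (-1 / σ)) - p * ((K - 1) / σ) - q * ((-K - 1) / σ)))))
      μ₀ := (inner1.add inner2).const_mul (1 / (1 - ε))
  have hgbig : HasDerivAt g
      ((1 / (1 - ε)) * ((σ * (-u₀ * p * ((K - 1) / σ) + -v₀ * q * ((-K - 1) / σ)
        - 2 * (-w₀ * stdNormalPdf w₀ * (-1 / σ))))
        + (1 * (2 * stdCdf0 w₀ - stdCdf0 u₀ - stdCdf0 v₀)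
        + μ₀ * (2 * (stdNormalPdf w₀ * (-1 / σ)) - p * ((K - 1) / σ) - q * ((-K - 1) / σ)))))
      μ₀ := by
    apply big.congr_of_eventuallyEq
    apply Filter.Eventually.of_forall
    intro μ
    rw [hg μ, g_explicit ε hσ μ (hk0 μ)]
  have hval : (1 / (1 - ε)) * ((σ * (-u₀ * p * ((K - 1) / σ) + -v₀ * q * ((-K - 1) / σ)
        - 2 * (-w₀ * stdNormalPdf w₀ * (-1 / σ))))
        + (1 * (2 * stdCdf0 w₀ - stdCdf0 u₀ - stdCdf0 v₀)
        + μ₀ * (2 * (stdNormalPdf w₀ * (-1 / σ)) - p * ((K - 1) / σ) - q * ((-K - 1) / σ))))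
      = (1 / (1 - ε)) *
          ((∫ z in ((k μ₀ - μ₀) / σ)..(-μ₀ / σ), stdNormalPdf z) -
            ∫ z in (-μ₀ / σ)..((-k μ₀ - μ₀) / σ), stdNormalPdf z) := by
    rw [integral_stdNormalPdf, integral_stdNormalPdf, ← hc₀, ← hu₀, ← hv₀, ← hw₀]
    congr 1
    have h1 : u₀ = (c₀ - μ₀) / σ := hu₀
    have h2 : v₀ = (-c₀ - μ₀) / σ := hv₀
    have h3 : w₀ = -μ₀ / σ := hw₀
    have hpqne : p + q ≠ 0 := by positivity
    rw [h1, h2, h3]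
    field_simp [hpqne]
    linear_combination (-(c₀ * (p - q))) * mul_inv_cancel₀ hpqne
  rw [hval] at hgbig
  refine ⟨hgbig, ?_, ?_⟩
  · -- μ₀ > 0
    intro hμpos
    have hkneg : k μ₀ < 0 := k_neg hε k hk0 hk μ₀
    have hwneg : w₀ < 0 := by
      rw [hw₀]
      apply div_neg_of_neg_of_pos (by linarith) hσ
    have hLpos : 0 < -c₀ / σ := div_pos (by linarith) hσ
    have hcmp := tail_cmp hwneg hLpos
    have he1 : w₀ - -c₀ / σ = (k μ₀ - μ₀) / σ := by rw [hw₀, ← hc₀]; ring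
    have he2 : w₀ + -c₀ / σ = (-k μ₀ - μ₀) / σ := by rw [hw₀, ← hc₀]; ring
    rw [he1, he2, hw₀] at hcmp
    apply mul_neg_of_pos_of_neg hfacpos
    linarith
  · -- μ₀ < 0
    intro hμneg
    have hkneg : k μ₀ < 0 := k_neg hε k hk0 hk μ₀
    have hwpos : 0 < w₀ := by
      rw [hw₀]
      apply div_pos (by linarith) hσ
    have hLpos : 0 < -c₀ / σ := div_pos (by linarith) hσ
    have hcmp := tail_cmp (neg_neg_iff_pos.mpr hwpos) hLpos
    -- hcmp : ∫ in (-w₀ - L)..(-w₀) < ∫ in (-w₀)..(-w₀ + L)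
    have hr1 : ∫ z in (-w₀ - -c₀ / σ)..(-w₀), stdNormalPdf z
        = ∫ z in w₀..(w₀ + -c₀ / σ), stdNormalPdf z := by
      have := reflect_int w₀ (w₀ + -c₀ / σ)
      rw [← this]
      congr 1
      ring
    have hr2 : ∫ z in (-w₀)..(-w₀ + -c₀ / σ), stdNormalPdf z
        = ∫ z in (w₀ - -c₀ / σ)..w₀, stdNormalPdf z := by
      have := reflect_int (w₀ - -c₀ / σ) w₀
      rw [← this]
      congr 1
      ring
    rw [hr1, hr2] at hcmp
    have he1 : w₀ - -c₀ / σ = (k μ₀ - μ₀) / σ := by rw [hw₀, ← hc₀]; ring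
    have he2 : w₀ + -c₀ / σ = (-k μ₀ - μ₀) / σ := by rw [hw₀, ← hc₀]; ring
    rw [he1, he2, hw₀] at hcmp
    apply mul_pos hfacpos
    linarith
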